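/- For all integers m ≥ 1 and 0 ≤ i ≤ t, every vertex that is added to the Koch network at step i has degree 2(m+1)^{t-i} in K_{m,t}. -/

import Mathlib

/-- The triangles of the Koch network `K_{m,t}`: at step `t+1`, each old triangle survives and
each (triangle, corner, group) creates a new triangle. -/
def KochTri (m : ℕ) : ℕ → Type
  | 0 => Unit
  | t+1 => KochTri m t ⊕ (KochTri m t × Fin 3 × Fin m)

/-- The vertices of the Koch network `K_{m,t}`: at step `t+1`, each (triangle, corner, group)
creates two new vertices. -/
def KochVertex (m : ℕ) : ℕ → Type
  | 0 => Fin 3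
  | t+1 => KochVertex m t ⊕ (KochTri m t × Fin 3 × Fin m × Fin 2)

/-- The three corner vertices of each triangle. -/
def KochCorner (m : ℕ) : ∀ t, KochTri m t → Fin 3 → KochVertex m t
  | 0, _, i => i
  | t+1, Sum.inl τ, i => Sum.inl (KochCorner m t τ i)
  | t+1, Sum.inr (τ, c, g), i =>
      ![Sum.inl (KochCorner m t τ c), Sum.inr (τ, c, g, 0), Sum.inr (τ, c, g, 1)] i

instance KochTri.instDecidableEq (m : ℕ) : ∀ t, DecidableEq (KochTri m t)
  | 0 => inferInstanceAs (DecidableEq Unit)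
  | t+1 =>
    letI := KochTri.instDecidableEq m t
    inferInstanceAs (DecidableEq (KochTri m t ⊕ (KochTri m t × Fin 3 × Fin m)))

instance KochVertex.instDecidableEq (m : ℕ) : ∀ t, DecidableEq (KochVertex m t)
  | 0 => inferInstanceAs (DecidableEq (Fin 3))
  | t+1 =>
    letI := KochVertex.instDecidableEq m t
    letI := KochTri.instDecidableEq m t
    inferInstanceAs (DecidableEq (KochVertex m t ⊕ (KochTri m t × Fin 3 × Fin m × Fin 2)))

instance KochTri.instFintype (m : ℕ) : ∀ t, Fintype (KochTri m t)
  | 0 => inferInstanceAs (Fintype Unit)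
  | t+1 =>
    letI := KochTri.instFintype m t
    inferInstanceAs (Fintype (KochTri m t ⊕ (KochTri m t × Fin 3 × Fin m)))

instance KochVertex.instFintype (m : ℕ) : ∀ t, Fintype (KochVertex m t)
  | 0 => inferInstanceAs (Fintype (Fin 3))
  | t+1 =>
    letI := KochVertex.instFintype m t
    letI := KochTri.instFintype m t
    inferInstanceAs (Fintype (KochVertex m t ⊕ (KochTri m t × Fin 3 × Fin m × Fin 2)))

/-- The Koch network `K_{m,t}`: two distinct vertices are adjacent iff they are corners of a
common triangle. -/
def KochGraph (m t : ℕ) : SimpleGraph (KochVertex m t) where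
  Adj u v := u ≠ v ∧ ∃ (τ : KochTri m t) (i j : Fin 3),
      KochCorner m t τ i = u ∧ KochCorner m t τ j = v
  symm := by constructor; rintro u v ⟨hne, τ, i, j, hi, hj⟩; exact ⟨hne.symm, τ, j, i, hj, hi⟩
  loopless := by constructor; rintro u ⟨hne, -⟩; exact hne rfl

instance (m t : ℕ) : DecidableRel (KochGraph m t).Adj := fun u v =>
  inferInstanceAs (Decidable (u ≠ v ∧ ∃ (τ : KochTri m t) (i j : Fin 3),
      KochCorner m t τ i = u ∧ KochCorner m t τ j = v))

/-- The step at which a vertex of `K_{m,t}` was added (initial vertices are added at step 0). -/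
def KochBirth (m : ℕ) : ∀ t, KochVertex m t → ℕ
  | 0, _ => 0
  | t+1, Sum.inl v => KochBirth m t v
  | t+1, Sum.inr _ => t+1

/-- The canonical inclusion of `K_{m,t}` into `K_{m,t+1}`. -/
def KochInl (m t : ℕ) (v : KochVertex m t) : KochVertex m (t+1) := Sum.inl v

/-- The other member of the group of two with which a (non-initial) vertex was added. -/
def KochSibling (m : ℕ) : ∀ t, KochVertex m t → KochVertex m t
  | 0, v => v
  | t+1, Sum.inl v => Sum.inl (KochSibling m t v)
  | t+1, Sum.inr (τ, c, g, p) => Sum.inr (τ, c, g, if p = 0 then 1 else 0)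

/-- The father vertex of a (non-initial) vertex: the existing vertex to which its group of two
was attached. -/
def KochFather (m : ℕ) : ∀ t, KochVertex m t → KochVertex m t
  | 0, v => v
  | t+1, Sum.inl v => Sum.inl (KochFather m t v)
  | t+1, Sum.inr (τ, c, _, _) => Sum.inl (KochCorner m t τ c)

open Finset

@[simp] lemma koch_inl_eq_inl {m t : ℕ} {u v : KochVertex m t} :
    @Eq (KochVertex m (t+1)) (Sum.inl u) (Sum.inl v) ↔ u = v := by
  exact Sum.inl_injective.eq_iff

@[simp] lemma koch_inr_eq_inr {m t : ℕ} {q q' : KochTri m t × Fin 3 × Fin m × Fin 2} :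
    @Eq (KochVertex m (t+1)) (Sum.inr q) (Sum.inr q') ↔ q = q' := by
  exact Sum.inr_injective.eq_iff

@[simp] lemma koch_inl_eq_inr {m t : ℕ} {u : KochVertex m t}
    {q : KochTri m t × Fin 3 × Fin m × Fin 2} :
    @Eq (KochVertex m (t+1)) (Sum.inl u) (Sum.inr q) ↔ False := by
  simp only [iff_false]; exact Sum.inl_ne_inr

@[simp] lemma koch_inr_eq_inl {m t : ℕ} {u : KochVertex m t}
    {q : KochTri m t × Fin 3 × Fin m × Fin 2} :
    @Eq (KochVertex m (t+1)) (Sum.inr q) (Sum.inl u) ↔ False := by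
  simp only [iff_false]; exact Sum.inr_ne_inl

lemma koch_birth_le (m : ℕ) : ∀ t (v : KochVertex m t), KochBirth m t v ≤ t
  | 0, _ => le_refl 0
  | t+1, Sum.inl v => (koch_birth_le m t v).trans (Nat.le_succ t)
  | t+1, Sum.inr _ => le_refl (t+1)

lemma koch_adj_inl_inl (m t : ℕ) (u v : KochVertex m t) :
    (KochGraph m (t+1)).Adj (Sum.inl u) (Sum.inl v) ↔ (KochGraph m t).Adj u v := by
  constructor
  · rintro ⟨hne, τ, i, j, hi, hj⟩
    match τ with
    | Sum.inl τ =>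
      simp only [KochCorner, koch_inl_eq_inl] at hi hj
      exact ⟨fun h => hne (by rw [h]), τ, i, j, hi, hj⟩
    | Sum.inr (τ, c, g) =>
      fin_cases i <;> fin_cases j <;> simp_all [KochCorner]
  · rintro ⟨hne, τ, i, j, hi, hj⟩
    exact ⟨fun h => hne (Sum.inl_injective h), Sum.inl τ, i, j, by simp [KochCorner, hi], by simp [KochCorner, hj]⟩

lemma koch_adj_inl_inr (m t : ℕ) (u : KochVertex m t) (τ : KochTri m t) (c : Fin 3)
    (g : Fin m) (p : Fin 2) :
    (KochGraph m (t+1)).Adj (Sum.inl u) (Sum.inr (τ, c, g, p)) ↔ KochCorner m t τ c = u := by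
  constructor
  · rintro ⟨hne, σ, i, j, hi, hj⟩
    match σ with
    | Sum.inl σ => simp [KochCorner] at hj
    | Sum.inr (τ', c', g') =>
      fin_cases i <;> fin_cases j <;> simp_all [KochCorner, Prod.ext_iff]
  · intro h
    refine ⟨Sum.inl_ne_inr, Sum.inr (τ, c, g), 0, if p = 0 then 1 else 2, by simp [KochCorner, h], ?_⟩
    fin_cases p <;> simp [KochCorner]

lemma koch_adj_inr_inr (m t : ℕ) (τ τ' : KochTri m t) (c c' : Fin 3)
    (g g' : Fin m) (p p' : Fin 2) :
    (KochGraph m (t+1)).Adj (Sum.inr (τ, c, g, p)) (Sum.inr (τ', c', g', p')) ↔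
      (τ = τ' ∧ c = c' ∧ g = g' ∧ p ≠ p') := by
  constructor
  · rintro ⟨hne, σ, i, j, hi, hj⟩
    match σ with
    | Sum.inl σ => simp [KochCorner] at hj
    | Sum.inr (τ₀, c₀, g₀) =>
      fin_cases i <;> fin_cases j <;> fin_cases p <;> fin_cases p' <;> simp_all [KochCorner, Prod.ext_iff] <;> exact hne rfl
  · rintro ⟨rfl, rfl, rfl, hp⟩
    refine ⟨fun h => hp (congrArg (fun x => x.2.2.2) (Sum.inr_injective h)), Sum.inr (τ, c, g), if p = 0 then 1 else 2,
      if p' = 0 then 1 else 2, ?_, ?_⟩ <;> [fin_cases p; fin_cases p'] <;> simp [KochCorner]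

/-- Number of (triangle, corner-index) incidences at a vertex. -/
def KochInc (m t : ℕ) (v : KochVertex m t) : ℕ :=
  (Finset.univ.filter fun p : KochTri m t × Fin 3 => KochCorner m t p.1 p.2 = v).card

lemma card_filter_sum_type {α β : Type*} [Fintype α] [Fintype β]
    (p : α ⊕ β → Prop) [DecidablePred p] :
    (Finset.univ.filter p).card
      = (Finset.univ.filter fun a => p (Sum.inl a)).card
        + (Finset.univ.filter fun b => p (Sum.inr b)).card := by
  rw [Finset.card_filter, Finset.card_filter, Finset.card_filter, Fintype.sum_sum_type]

lemma koch_adj_zero (m : ℕ) (u v : KochVertex m 0) :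
    (KochGraph m 0).Adj u v ↔ u ≠ v := by
  constructor
  · exact fun h => h.1
  · intro h
    exact ⟨h, (), u, v, rfl, rfl⟩

lemma koch_degree_zero (m : ℕ) (v : KochVertex m 0) : (KochGraph m 0).degree v = 2 := by
  rw [SimpleGraph.degree, SimpleGraph.neighborFinset_eq_filter]
  have : (Finset.univ.filter fun u => (KochGraph m 0).Adj v u)
      = Finset.univ.filter fun u => ¬ v = u := by
    apply Finset.filter_congr
    intro u _
    simp [koch_adj_zero]
  rw [this, Finset.filter_not, Finset.filter_eq, if_pos (Finset.mem_univ v)]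
  rw [Finset.card_sdiff_of_subset (by simp)]
  show Fintype.card (Fin 3) - _ = 2
  simp

lemma koch_inc_zero (m : ℕ) (v : KochVertex m 0) : KochInc m 0 v = 1 := by
  rw [KochInc, Finset.card_filter, Fintype.sum_prod_type]
  show ∑ _ : Unit, ∑ i : Fin 3, (@ite ℕ (i = v) (instDecidableEqFin 3 i v) 1 0) = 1
  simp
  exact Finset.card_eq_one.mpr ⟨v, by ext; simp; exact Finset.mem_singleton.symm⟩
lemma koch_count_aux (m t : ℕ) (u : KochVertex m t) :
    (Finset.univ.filter fun q : KochTri m t × Fin 3 × Fin m × Fin 2 =>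
      KochCorner m t q.1 q.2.1 = u).card = 2 * m * KochInc m t u := by
  rw [Finset.card_filter, KochInc, Finset.card_filter]
  simp_rw [Fintype.sum_prod_type]
  simp only [apply_ite Finset.card, Finset.sum_ite_irrel, Finset.sum_const, Finset.card_univ,
    Fintype.card_fin, smul_eq_mul, Finset.sum_const_zero, Finset.mul_sum, mul_ite, mul_one,
    mul_zero]
  refine Finset.sum_congr rfl fun τ _ => Finset.sum_congr rfl fun c _ => ?_
  split_ifs <;> simp [Finset.sum_const, mul_comm]
@[simp] lemma koch_corner_inl (m t : ℕ) (τ : KochTri m t) (i : Fin 3) :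
    KochCorner m (t+1) (Sum.inl τ) i = Sum.inl (KochCorner m t τ i) := rfl

@[simp] lemma koch_corner_inr_zero (m t : ℕ) (x : KochTri m t × Fin 3 × Fin m) :
    KochCorner m (t+1) (Sum.inr x) 0 = Sum.inl (KochCorner m t x.1 x.2.1) := by
  obtain ⟨τ, c, g⟩ := x; rfl

@[simp] lemma koch_corner_inr_one (m t : ℕ) (x : KochTri m t × Fin 3 × Fin m) :
    KochCorner m (t+1) (Sum.inr x) 1 = Sum.inr (x.1, x.2.1, x.2.2, 0) := by
  obtain ⟨τ, c, g⟩ := x; rfl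

@[simp] lemma koch_corner_inr_two (m t : ℕ) (x : KochTri m t × Fin 3 × Fin m) :
    KochCorner m (t+1) (Sum.inr x) 2 = Sum.inr (x.1, x.2.1, x.2.2, 1) := by
  obtain ⟨τ, c, g⟩ := x; rfl

lemma koch_tri_sum {m t : ℕ} (f : KochTri m (t+1) → ℕ) :
    ∑ x : KochTri m (t+1), f x
      = (∑ τ : KochTri m t, f (Sum.inl τ))
        + ∑ y : KochTri m t × Fin 3 × Fin m, f (Sum.inr y) :=
  Fintype.sum_sum_type f

lemma koch_vertex_sum {m t : ℕ} (f : KochVertex m (t+1) → ℕ) :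
    ∑ x : KochVertex m (t+1), f x
      = (∑ u : KochVertex m t, f (Sum.inl u))
        + ∑ q : KochTri m t × Fin 3 × Fin m × Fin 2, f (Sum.inr q) :=
  Fintype.sum_sum_type f

lemma koch_adj_inl_inr' (m t : ℕ) (u : KochVertex m t)
    (q : KochTri m t × Fin 3 × Fin m × Fin 2) :
    (KochGraph m (t+1)).Adj (Sum.inl u) (Sum.inr q) ↔ KochCorner m t q.1 q.2.1 = u := by
  obtain ⟨τ, c, g, p⟩ := q
  exact koch_adj_inl_inr m t u τ c g p

lemma koch_adj_KI (m t : ℕ) (u v : KochVertex m t) :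
    (KochGraph m (t+1)).Adj (KochInl m t u) (Sum.inl v) ↔ (KochGraph m t).Adj u v :=
  koch_adj_inl_inl m t u v

lemma koch_adj_KI' (m t : ℕ) (u : KochVertex m t)
    (q : KochTri m t × Fin 3 × Fin m × Fin 2) :
    (KochGraph m (t+1)).Adj (KochInl m t u) (Sum.inr q) ↔ KochCorner m t q.1 q.2.1 = u :=
  koch_adj_inl_inr' m t u q

lemma koch_degree_inl (m t : ℕ) (u : KochVertex m t) :
    @SimpleGraph.degree _ (KochGraph m (t+1)) (Sum.inl u) (@Subtype.fintype _ _ (fun a => @SimpleGraph.neighborSet.memDecidable _ (KochGraph m (t+1)) (Sum.inl u) _ a) _)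
      = (KochGraph m t).degree u + 2 * m * KochInc m t u := by
  show (KochGraph m (t+1)).degree (KochInl m t u) = _
  rw [SimpleGraph.degree, SimpleGraph.neighborFinset_eq_filter, Finset.card_filter,
    koch_vertex_sum]
  congr 1
  · rw [SimpleGraph.degree, SimpleGraph.neighborFinset_eq_filter, Finset.card_filter]
    simp_rw [koch_adj_KI]
  · rw [← koch_count_aux m t u, Finset.card_filter]
    simp_rw [koch_adj_KI']
lemma koch_inc_inl (m t : ℕ) (u : KochVertex m t) :
    KochInc m (t+1) (Sum.inl u) = (m + 1) * KochInc m t u := by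
  show KochInc m (t+1) (KochInl m t u) = _
  rw [KochInc, Finset.card_filter]
  simp_rw [Fintype.sum_prod_type]
  rw [koch_tri_sum]
  simp only [KochInl, koch_corner_inl, koch_inl_eq_inl, Fin.sum_univ_three, koch_corner_inr_zero,
    koch_corner_inr_one, koch_corner_inr_two, koch_inr_eq_inl, if_false, add_zero]
  have hI : KochInc m t u = ∑ x : KochTri m t,
      (((if KochCorner m t x 0 = u then 1 else 0) + if KochCorner m t x 1 = u then 1 else 0)
        + if KochCorner m t x 2 = u then 1 else 0) := by
    rw [KochInc, Finset.card_filter]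
    simp_rw [Fintype.sum_prod_type, Fin.sum_univ_three]
  have h2 : (∑ x : KochTri m t × Fin 3 × Fin m,
      if KochCorner m t x.1 x.2.1 = u then (1:ℕ) else 0) = m * KochInc m t u := by
    rw [KochInc, Finset.card_filter]
    simp_rw [Fintype.sum_prod_type]
    rw [Finset.mul_sum]
    refine Finset.sum_congr rfl fun τ _ => ?_
    rw [Finset.mul_sum]
    refine Finset.sum_congr rfl fun c _ => ?_
    split_ifs <;> simp
  rw [h2, ← hI]
  ring
lemma koch_adj_inr_inl (m t : ℕ) (τ : KochTri m t) (c : Fin 3) (g : Fin m) (p : Fin 2)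
    (w : KochVertex m t) :
    (KochGraph m (t+1)).Adj (Sum.inr (τ, c, g, p)) (Sum.inl w) ↔ KochCorner m t τ c = w := by
  exact ((KochGraph m (t+1)).adj_comm _ _).trans (koch_adj_inl_inr m t w τ c g p)

lemma koch_adj_inr' (m t : ℕ) (τ : KochTri m t) (c : Fin 3) (g : Fin m) (p : Fin 2)
    (q : KochTri m t × Fin 3 × Fin m × Fin 2) :
    (KochGraph m (t+1)).Adj (Sum.inr (τ, c, g, p)) (Sum.inr q) ↔
      q = (τ, c, g, if p = 0 then 1 else 0) := by
  obtain ⟨τ', c', g', p'⟩ := q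
  rw [koch_adj_inr_inr]
  constructor
  · rintro ⟨rfl, rfl, rfl, hp⟩
    simp only [Prod.mk.injEq, and_true, true_and]
    fin_cases p <;> fin_cases p' <;> simp_all
  · intro h
    simp only [Prod.mk.injEq] at h
    obtain ⟨h1, h2, h3, h4⟩ := h
    refine ⟨h1.symm, h2.symm, h3.symm, ?_⟩
    subst h4
    fin_cases p <;> simp
  
def KochInrV (m t : ℕ) (q : KochTri m t × Fin 3 × Fin m × Fin 2) : KochVertex m (t+1) :=
  Sum.inr q

lemma koch_adj_IR_inl (m t : ℕ) (τ : KochTri m t) (c : Fin 3) (g : Fin m) (p : Fin 2)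
    (w : KochVertex m t) :
    (KochGraph m (t+1)).Adj (KochInrV m t (τ, c, g, p)) (Sum.inl w) ↔ KochCorner m t τ c = w :=
  koch_adj_inr_inl m t τ c g p w

lemma koch_adj_IR' (m t : ℕ) (τ : KochTri m t) (c : Fin 3) (g : Fin m) (p : Fin 2)
    (q : KochTri m t × Fin 3 × Fin m × Fin 2) :
    (KochGraph m (t+1)).Adj (KochInrV m t (τ, c, g, p)) (Sum.inr q) ↔
      q = (τ, c, g, if p = 0 then 1 else 0) :=
  koch_adj_inr' m t τ c g p q

lemma koch_degree_inr (m t : ℕ) (τ : KochTri m t) (c : Fin 3) (g : Fin m) (p : Fin 2) :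
    @SimpleGraph.degree _ (KochGraph m (t+1)) (Sum.inr (τ, c, g, p)) (@Subtype.fintype _ _ (fun a => @SimpleGraph.neighborSet.memDecidable _ (KochGraph m (t+1)) (Sum.inr (τ, c, g, p)) _ a) _) = 2 := by
  show (KochGraph m (t+1)).degree (KochInrV m t (τ, c, g, p)) = 2
  rw [SimpleGraph.degree, SimpleGraph.neighborFinset_eq_filter, Finset.card_filter,
    koch_vertex_sum]
  simp_rw [koch_adj_IR_inl, koch_adj_IR']
  simp [Finset.sum_ite_eq, Finset.sum_ite_eq']
lemma koch_inc_inr (m t : ℕ) (τ : KochTri m t) (c : Fin 3) (g : Fin m) (p : Fin 2) :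
    KochInc m (t+1) (Sum.inr (τ, c, g, p)) = 1 := by
  unfold KochInc
  rw [Finset.card_filter]
  simp_rw [Fintype.sum_prod_type]
  rw [koch_tri_sum]
  simp only [Fin.sum_univ_three, koch_corner_inl, koch_corner_inr_zero, koch_corner_inr_one,
    koch_corner_inr_two, koch_inl_eq_inr, if_false, add_zero, zero_add,
    Finset.sum_const_zero, koch_inr_eq_inr]
  have key : ∀ (x : KochTri m t × Fin 3 × Fin m) (q : Fin 2),
      ((x.1, x.2.1, x.2.2, q) = (τ, c, g, p)) ↔ (x = (τ, c, g) ∧ q = p) := by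
    rintro ⟨a, b, d⟩ q
    simp only [Prod.ext_iff]
    tauto
  simp_rw [key]
  fin_cases p <;> simp [Finset.sum_ite_eq', Fin.ext_iff]
lemma koch_main (m : ℕ) : ∀ t (v : KochVertex m t),
    (KochGraph m t).degree v = 2 * (m + 1) ^ (t - KochBirth m t v) ∧
    KochInc m t v = (m + 1) ^ (t - KochBirth m t v)
  | 0, v => by
    refine ⟨?_, ?_⟩
    · rw [koch_degree_zero]
      simp [KochBirth]
    · rw [koch_inc_zero]
      simp [KochBirth]
  | t+1, Sum.inl u => by
    obtain ⟨hd, hi⟩ := koch_main m t u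
    have hb := koch_birth_le m t u
    have hs : t + 1 - KochBirth m (t+1) (Sum.inl u) = (t - KochBirth m t u) + 1 := by
      show t + 1 - KochBirth m t u = _
      omega
    refine ⟨?_, ?_⟩
    · rw [koch_degree_inl, hd, hi, hs]
      ring
    · rw [koch_inc_inl, hi, hs]
      ring
  | t+1, Sum.inr q => by
    obtain ⟨τ, c, g, p⟩ := q
    have hs : t + 1 - KochBirth m (t+1) (Sum.inr (τ, c, g, p)) = 0 := by
      show t + 1 - (t + 1) = 0
      omega
    rw [hs, koch_degree_inr, koch_inc_inr]
    simp

/-- For all integers m ≥ 1 and 0 ≤ i ≤ t, every vertex that is added to the Koch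
network at step i has degree `2(m+1)^(t-i)` in `K_{m,t}`. -/
theorem koch_degree_of_birth (m i t : ℕ) (hm : 1 ≤ m) (hit : i ≤ t)
    (v : KochVertex m t) (hv : KochBirth m t v = i) :
    (KochGraph m t).degree v = 2 * (m + 1) ^ (t - i) := by
  obtain ⟨hd, -⟩ := koch_main m t v
  rwa [hv] at hd
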